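/- Let p be a prime. Consider a commutative diagram of abelian groups consisting of two short exact sequences 0 → D₁ → G₁ → F₁ → 0 and 0 → D₂ → G₂ → F₂ → 0 and vertical homomorphisms f : D₁ → D₂, g : G₁ → G₂, h : F₁ → F₂ making both squares commute. Assume: F₁ and F₂ are finitely generated; multiplication by p is surjective on D₁ and on D₂; (a) f is surjective with finite kernel; (b) ker(g) contains no nonzero element of finite order coprime to p; (c) the restriction of h to the prime-to-p torsion subgroups, h : F₁[p'] → F₂[p'], is surjective. Then the induced homomorphism lim_p g : lim_p G₁ → lim_p G₂ is an isomorphism. -/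

import Mathlib

private lemma aux_pow_smul {G : Type*} [AddCommGroup G] (p : ℕ) (y : ℕ → G)
    (hy : ∀ n, p • y (n + 1) = y n) : ∀ k n, p ^ k • y (n + k) = y n := by
  intro k
  induction k with
  | zero => intro n; simp
  | succ k ih =>
    intro n
    have h1 : p ^ (k + 1) • y (n + (k + 1)) = p ^ k • (p • y ((n + k) + 1)) := by
      rw [pow_succ, mul_smul]; rfl
    rw [h1, hy (n + k), ih n]

private lemma aux_smul_inv {M : Type*} [AddCommGroup M] {p c m : ℕ}
    (hc : p * c ≡ 1 [MOD m]) (x : M) (hx : m • x = 0) : p • (c • x) = x := by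
  obtain ⟨k, hk⟩ := Nat.modEq_iff_dvd.mp hc
  have hmk : ((m : ℤ) * k) • x = 0 := by
    rw [mul_comm, mul_smul, natCast_zsmul, hx, smul_zero]
  have hz : ((p * c : ℕ) : ℤ) • x = x := by
    have hpc : ((p * c : ℕ) : ℤ) = 1 - (m : ℤ) * k := by push_cast at hk ⊢; linarith
    rw [hpc, sub_smul, one_smul, hmk, sub_zero]
  calc p • (c • x) = (p * c) • x := (mul_smul p c x).symm
    _ = x := by rw [← natCast_zsmul]; exact hz

private lemma aux_exists_inv {p m : ℕ} (h : Nat.Coprime p m) : ∃ c, p * c ≡ 1 [MOD m] := by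
  rcases Nat.lt_or_ge m 2 with hm | hm
  · interval_cases m
    · refine ⟨1, ?_⟩
      have hp1 : p = 1 := by simpa [Nat.Coprime] using h
      simp [hp1, Nat.ModEq]
    · exact ⟨0, Nat.modEq_one⟩
  · obtain ⟨b, -, hb⟩ := Nat.exists_mul_mod_eq_one_of_coprime h hm
    refine ⟨b, ?_⟩
    have : (1 : ℕ) % m = 1 := Nat.mod_eq_of_lt (by omega)
    simpa [Nat.ModEq, this] using hb

private lemma aux_ker_smul {A B : Type*} [AddCommGroup A] [AddCommGroup B]
    (f : A →+ B) (t : A) (ht : f t = 0) : Nat.card f.ker • t = 0 := by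
  have htm : t ∈ f.ker := by simpa [AddMonoidHom.mem_ker] using ht
  have h1 : addOrderOf (⟨t, htm⟩ : f.ker) ∣ Nat.card f.ker := addOrderOf_dvd_natCard _
  have h2 : (Nat.card f.ker) • (⟨t, htm⟩ : f.ker) = 0 :=
    addOrderOf_dvd_iff_nsmul_eq_zero.mp h1
  simpa using congrArg Subtype.val h2

private lemma aux_ord_dvd {F : Type*} [AddCommGroup F] (p : ℕ) (y : ℕ → F)
    (hy : ∀ n, p • y (n + 1) = y n)
    (hcop : ∀ n, (addOrderOf (y n)).Coprime p) :
    ∀ n, addOrderOf (y n) ∣ addOrderOf (y 0) := by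
  intro n
  induction n with
  | zero => exact dvd_rfl
  | succ n ih =>
    have h1 : (addOrderOf (y n) * p) • y (n + 1) = 0 := by
      rw [mul_smul, hy n, addOrderOf_nsmul_eq_zero]
    exact ((hcop (n + 1)).dvd_of_dvd_mul_right (addOrderOf_dvd_of_nsmul_eq_zero h1)).trans ih

private lemma aux_tower_torsion {F : Type*} [AddCommGroup F] [AddGroup.FG F]
    {p : ℕ} (hp : p.Prime) (y : ℕ → F) (hy : ∀ n, p • y (n + 1) = y n) (n : ℕ) :
    IsOfFinAddOrder (y n) ∧ (addOrderOf (y n)).Coprime p := by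
  have hfin : Module.Finite ℤ F := Module.Finite.iff_addGroup_fg.mpr ‹_›
  have hNoeth : IsNoetherian ℤ F := inferInstance
  set C : ℕ →o Submodule ℤ F :=
    ⟨fun n => Submodule.span ℤ {y n}, monotone_nat_of_le_succ (fun n => by
      rw [Submodule.span_singleton_le_iff_mem, ← hy n, ← Nat.cast_smul_eq_nsmul ℤ]
      exact Submodule.smul_mem _ _ (Submodule.mem_span_singleton_self _))⟩ with hCdef
  obtain ⟨N, hN⟩ := monotone_stabilizes_iff_noetherian.mpr hNoeth C
  have key : ∀ m, N ≤ m →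
      IsOfFinAddOrder (y (m + 1)) ∧ (addOrderOf (y (m + 1))).Coprime p := by
    intro m hm
    have h1 : y (m + 1) ∈ C m := by
      rw [← hN m hm, hN (m + 1) (hm.trans (Nat.le_succ m))]
      exact Submodule.mem_span_singleton_self _
    obtain ⟨c, hc⟩ := Submodule.mem_span_singleton.mp h1
    have h2 : ((1 : ℤ) - c * p) • y (m + 1) = 0 := by
      have h3 : (c * (p : ℤ)) • y (m + 1) = y (m + 1) := by
        rw [mul_smul, Nat.cast_smul_eq_nsmul ℤ, hy m, hc]
      rw [sub_smul, one_smul, h3, sub_self]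
    have hne : (1 : ℤ) - c * p ≠ 0 := by
      intro heq
      have hcp : c * (p : ℤ) = 1 := by linarith
      have : (p : ℤ) ∣ ((1 : ℕ) : ℤ) := ⟨c, by push_cast; linarith⟩
      have := Nat.dvd_one.mp (Int.ofNat_dvd.mp this)
      exact hp.ne_one this
    have hnat : ((1 : ℤ) - c * p).natAbs • y (m + 1) = 0 := by
      rw [← natCast_zsmul]
      rcases Int.natAbs_eq ((1 : ℤ) - c * p) with he | he
      · rw [← he, h2]
      · rw [← neg_eq_iff_eq_neg.mpr he, neg_smul, h2, neg_zero]
    have hpos : 0 < ((1 : ℤ) - c * p).natAbs := Int.natAbs_pos.mpr hne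
    have hfin' : IsOfFinAddOrder (y (m + 1)) :=
      isOfFinAddOrder_iff_nsmul_eq_zero.mpr ⟨_, hpos, hnat⟩
    refine ⟨hfin', ?_⟩
    have hdvd : addOrderOf (y (m + 1)) ∣ ((1 : ℤ) - c * p).natAbs :=
      addOrderOf_dvd_of_nsmul_eq_zero hnat
    have hnd : ¬ p ∣ addOrderOf (y (m + 1)) := by
      intro hpd
      have h5 : ((addOrderOf (y (m + 1)) : ℕ) : ℤ) ∣ (1 : ℤ) - c * p :=
        (Int.natCast_dvd_natCast.mpr hdvd).trans (Int.natAbs_dvd.mpr dvd_rfl)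
      have h4 : (p : ℤ) ∣ (1 : ℤ) - c * p :=
        (Int.natCast_dvd_natCast.mpr hpd).trans h5
      have h6 : (p : ℤ) ∣ (1 : ℤ) :=
        (sub_add_cancel (1 : ℤ) (c * p)) ▸ dvd_add h4 (dvd_mul_left _ _)
      exact hp.ne_one (Nat.dvd_one.mp (Int.ofNat_dvd.mp (by exact_mod_cast h6)))
    exact (Nat.coprime_comm.mp ((hp.coprime_iff_not_dvd).mpr hnd))
  -- general n
  obtain ⟨hf1, hc1⟩ := key (n + N) (Nat.le_add_left N n)
  have he : p ^ (N + 1) • y (n + (N + 1)) = y n := aux_pow_smul p y hy (N + 1) n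
  have hord : addOrderOf (y (n + N + 1)) • y n = 0 := by
    rw [← he, smul_comm]
    show p ^ (N + 1) • addOrderOf (y (n + N + 1)) • y (n + N + 1) = 0
    rw [addOrderOf_nsmul_eq_zero, smul_zero]
  refine ⟨isOfFinAddOrder_iff_nsmul_eq_zero.mpr ⟨_, hf1.addOrderOf_pos, hord⟩, ?_⟩
  exact Nat.Coprime.coprime_dvd_left (addOrderOf_dvd_of_nsmul_eq_zero hord) hc1



/-- Lemma 3.11 of the paper.  Given a map of short exact sequences of abelian groups
`0 → Dᵢ → Gᵢ → Fᵢ → 0` (`i = 1, 2`) with vertical maps `f, g, h`, where `F₁, F₂` are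
finitely generated, multiplication by `p` is surjective on `D₁` and `D₂`,
(a) `f` is surjective with finite kernel, (b) `ker g` contains no nonzero element of
finite order coprime to `p`, and (c) `h` is surjective on prime-to-`p` torsion, the
induced map `lim_p G₁ → lim_p G₂` on the inverse limits of the multiplication-by-`p`
towers is an isomorphism (it is both injective and surjective). -/
theorem plim_map_bijective_of_diagram
    (p : ℕ) (hp : p.Prime)
    {D₁ G₁ F₁ D₂ G₂ F₂ : Type*}
    [AddCommGroup D₁] [AddCommGroup G₁] [AddCommGroup F₁]
    [AddCommGroup D₂] [AddCommGroup G₂] [AddCommGroup F₂]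
    [AddGroup.FG F₁] [AddGroup.FG F₂]
    (i₁ : D₁ →+ G₁) (π₁ : G₁ →+ F₁) (i₂ : D₂ →+ G₂) (π₂ : G₂ →+ F₂)
    (f : D₁ →+ D₂) (g : G₁ →+ G₂) (h : F₁ →+ F₂)
    -- the rows are short exact sequences
    (hi₁ : Function.Injective i₁) (hπ₁ : Function.Surjective π₁)
    (hex₁ : ∀ x : G₁, π₁ x = 0 ↔ ∃ d : D₁, i₁ d = x)
    (hi₂ : Function.Injective i₂) (hπ₂ : Function.Surjective π₂)
    (hex₂ : ∀ x : G₂, π₂ x = 0 ↔ ∃ d : D₂, i₂ d = x)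
    -- the squares commute
    (hsq₁ : ∀ d : D₁, g (i₁ d) = i₂ (f d)) (hsq₂ : ∀ x : G₁, h (π₁ x) = π₂ (g x))
    -- multiplication by `p` is surjective on `D₁` and `D₂`
    (hD₁ : ∀ d : D₁, ∃ d' : D₁, p • d' = d) (hD₂ : ∀ d : D₂, ∃ d' : D₂, p • d' = d)
    -- (a) `f` is surjective with finite kernel
    (hfsurj : Function.Surjective f) (hfker : (f.ker : Set D₁).Finite)
    -- (b) `ker g` has no nonzero element of finite order coprime to `p`
    (hg : ∀ x : G₁, g x = 0 → IsOfFinAddOrder x → (addOrderOf x).Coprime p → x = 0)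
    -- (c) `h : F₁[p'] → F₂[p']` is surjective
    (hh : ∀ y : F₂, IsOfFinAddOrder y → (addOrderOf y).Coprime p →
        ∃ x : F₁, IsOfFinAddOrder x ∧ (addOrderOf x).Coprime p ∧ h x = y) :
    -- the induced map `lim_p G₁ → lim_p G₂` is injective …
    (∀ x y : ℕ → G₁, (∀ n, p • x (n + 1) = x n) → (∀ n, p • y (n + 1) = y n) →
        (∀ n, g (x n) = g (y n)) → x = y) ∧
    -- … and surjective
    (∀ u : ℕ → G₂, (∀ n, p • u (n + 1) = u n) →
        ∃ x : ℕ → G₁, (∀ n, p • x (n + 1) = x n) ∧ ∀ n, g (x n) = u n) := by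
  haveI : Finite f.ker := hfker.to_subtype
  have hN0 : 0 < Nat.card f.ker := Nat.card_pos
  set N : ℕ := Nat.card f.ker with hNdef
  set a : ℕ := N.factorization p with hadef
  set q : ℕ := N / p ^ a with hqdef
  have hpaq : p ^ a * q = N := Nat.ordProj_mul_ordCompl_eq_self N p
  have hqp : q.Coprime p := (Nat.coprime_ordCompl hp hN0.ne').symm
  have hq0 : 0 < q := Nat.ordCompl_pos p hN0.ne'
  constructor
  · intro x y hx hy hxy
    set z : ℕ → G₁ := fun n => x n - y n with hzdef
    have hz : ∀ n, p • z (n + 1) = z n := fun n => by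
      simp only [hzdef, smul_sub, hx n, hy n]
    have hgz : ∀ n, g (z n) = 0 := fun n => by
      simp [hzdef, map_sub, hxy n]
    have hw : ∀ n, p • π₁ (z (n + 1)) = π₁ (z n) := fun n => by rw [← map_nsmul, hz n]
    have hwt : ∀ n, IsOfFinAddOrder (π₁ (z n)) ∧ (addOrderOf (π₁ (z n))).Coprime p :=
      fun n => aux_tower_torsion hp (fun k => π₁ (z k)) hw n
    set m : ℕ := addOrderOf (π₁ (z 0)) with hmdef
    have hmp : m.Coprime p := (hwt 0).2
    have hm0 : 0 < m := (hwt 0).1.addOrderOf_pos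
    have hdvd : ∀ n, addOrderOf (π₁ (z n)) ∣ m := aux_ord_dvd p _ hw (fun n => (hwt n).2)
    have hmz : ∀ n, π₁ (m • z n) = 0 := fun n => by
      rw [map_nsmul]
      exact addOrderOf_dvd_iff_nsmul_eq_zero.mp (hdvd n)
    choose d hd using fun n => (hex₁ (m • z n)).mp (hmz n)
    have hfd : ∀ n, f (d n) = 0 := by
      intro n
      apply hi₂
      rw [← hsq₁, hd n, map_nsmul, hgz n, smul_zero, map_zero]
    have hpd : ∀ n, p • d (n + 1) = d n := by
      intro n
      apply hi₁
      rw [map_nsmul, hd (n + 1), smul_comm, hz n, hd n]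
    have hqd : ∀ n, q • d n = 0 := by
      intro n
      have h1 : p ^ a • d (n + a) = d n := aux_pow_smul p d hpd a n
      rw [← h1, smul_smul, mul_comm, hpaq]
      exact aux_ker_smul f _ (hfd (n + a))
    have hzn : ∀ n, z n = 0 := by
      intro n
      have h1 : (m * q) • z n = 0 := by
        rw [mul_comm, mul_smul, ← hd n, ← map_nsmul, hqd n, map_zero]
      refine hg _ (hgz n) (isOfFinAddOrder_iff_nsmul_eq_zero.mpr
        ⟨m * q, by positivity, h1⟩) ?_
      exact Nat.Coprime.coprime_dvd_left (addOrderOf_dvd_of_nsmul_eq_zero h1) (hmp.mul hqp)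
    funext n
    exact sub_eq_zero.mp (hzn n)
  · intro u hu
    have hw : ∀ n, p • π₂ (u (n + 1)) = π₂ (u n) := fun n => by rw [← map_nsmul, hu n]
    have hwt : ∀ n, IsOfFinAddOrder (π₂ (u n)) ∧ (addOrderOf (π₂ (u n))).Coprime p :=
      fun n => aux_tower_torsion hp (fun k => π₂ (u k)) hw n
    set m₀ : ℕ := addOrderOf (π₂ (u 0)) with hm₀def
    have hdvd : ∀ n, addOrderOf (π₂ (u n)) ∣ m₀ :=
      aux_ord_dvd p (fun k => π₂ (u k)) hw (fun n => (hwt n).2)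
    obtain ⟨v₀, hv₀fin, hv₀cop, hv₀⟩ := hh (π₂ (u 0)) (hwt 0).1 (hwt 0).2
    set m₁ : ℕ := addOrderOf v₀ with hm₁def
    set M : ℕ := m₀ * m₁ with hMdef
    have hMp : M.Coprime p := Nat.Coprime.mul (hwt 0).2 hv₀cop
    obtain ⟨c, hc⟩ := aux_exists_inv hMp.symm
    set v : ℕ → F₁ := fun n => c ^ n • v₀ with hvdef
    have hMv₀ : M • v₀ = 0 := by
      rw [hMdef, mul_smul, addOrderOf_nsmul_eq_zero, smul_zero]
    have hMv : ∀ n, M • v n = 0 := fun n => by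
      show M • (c ^ n • v₀) = 0
      rw [smul_comm, hMv₀, smul_zero]
    have hpv : ∀ n, p • v (n + 1) = v n := by
      intro n
      show p • (c ^ (n + 1) • v₀) = c ^ n • v₀
      rw [pow_succ, mul_smul, smul_comm p (c ^ n), aux_smul_inv hc v₀ hMv₀]
    have hv0 : v 0 = v₀ := by simp [hvdef]
    have hMu : ∀ n, M • π₂ (u n) = 0 := by
      intro n
      rw [hMdef, mul_comm m₀ m₁, mul_smul, addOrderOf_dvd_iff_nsmul_eq_zero.mp (hdvd n),
        smul_zero]
    have hhv : ∀ n, h (v n) = π₂ (u n) := by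
      intro n
      have h1 : p ^ n • (h (v n) - π₂ (u n)) = 0 := by
        have e1 : p ^ n • v n = v 0 := by
          have := aux_pow_smul p v hpv n 0
          simpa using this
        have e2 : p ^ n • u n = u 0 := by
          have := aux_pow_smul p u hu n 0
          simpa using this
        rw [smul_sub, ← map_nsmul, ← map_nsmul, e1, e2, hv0, hv₀, sub_self]
      have h2 : M • (h (v n) - π₂ (u n)) = 0 := by
        rw [smul_sub, ← map_nsmul, hMv n, map_zero, hMu n, sub_self]
      have h3 : addOrderOf (h (v n) - π₂ (u n)) ∣ Nat.gcd (p ^ n) M :=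
        Nat.dvd_gcd (addOrderOf_dvd_of_nsmul_eq_zero h1) (addOrderOf_dvd_of_nsmul_eq_zero h2)
      have h4 : Nat.gcd (p ^ n) M = 1 := Nat.Coprime.pow_left n hMp.symm
      rw [h4, Nat.dvd_one] at h3
      exact sub_eq_zero.mp (AddMonoid.addOrderOf_eq_one_iff.mp h3)
    choose w hwv using fun n => hπ₁ (v n)
    have hlift : ∀ n, ∃ xn : G₁, g xn = u n ∧ π₁ xn = v n := by
      intro n
      have hπδ : π₂ (g (w n) - u n) = 0 := by rw [map_sub, ← hsq₂, hwv n, hhv n, sub_self]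
      obtain ⟨e, he⟩ := (hex₂ _).mp hπδ
      obtain ⟨cc, hcc⟩ := hfsurj e
      refine ⟨w n - i₁ cc, ?_, ?_⟩
      · rw [map_sub, hsq₁, hcc, he]; abel
      · have hz : π₁ (i₁ cc) = 0 := (hex₁ _).mpr ⟨cc, rfl⟩
        rw [map_sub, hz, hwv n, sub_zero]
    choose x' hx'g hx'π using hlift
    have hδ : ∀ n, ∃ t : D₁, i₁ t = p • x' (n + 1) - x' n := by
      intro n
      apply (hex₁ _).mp
      rw [map_sub, map_nsmul, hx'π, hx'π, hpv n, sub_self]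
    choose t ht using hδ
    have hft : ∀ n, f (t n) = 0 := by
      intro n
      apply hi₂
      rw [← hsq₁, ht n, map_sub, map_nsmul, hx'g, hx'g, hu n, sub_self, map_zero]
    have hNt : ∀ n, N • t n = 0 := fun n => aux_ker_smul f _ (hft n)
    have hco : Nat.Coprime (p ^ a) q := Nat.Coprime.pow_left a hqp.symm
    set A : ℤ := Nat.gcdA (p ^ a) q with hAdef
    set B : ℤ := Nat.gcdB (p ^ a) q with hBdef
    have hbez : (p ^ a : ℤ) * A + (q : ℤ) * B = 1 := by
      have h1 := Nat.gcd_eq_gcd_ab (p ^ a) q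
      have h2 : (Nat.gcd (p ^ a) q) = 1 := hco
      rw [h2] at h1
      push_cast at h1 ⊢
      linarith
    set tp : ℕ → D₁ := fun n => ((q : ℤ) * B) • t n with htpdef
    set tq : ℕ → D₁ := fun n => ((p ^ a : ℤ) * A) • t n with htqdef
    have htsum : ∀ n, tp n + tq n = t n := by
      intro n
      show ((q : ℤ) * B) • t n + ((p ^ a : ℤ) * A) • t n = t n
      rw [← add_smul, show (q : ℤ) * B + (p ^ a : ℤ) * A = 1 by linarith, one_smul]
    have hftp : ∀ n, f (tp n) = 0 := by
      intro n; show f (((q : ℤ) * B) • t n) = 0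
      rw [map_zsmul, hft n, smul_zero]
    have hftq : ∀ n, f (tq n) = 0 := by
      intro n; show f (((p ^ a : ℤ) * A) • t n) = 0
      rw [map_zsmul, hft n, smul_zero]
    have hkillp : ∀ n, p ^ a • tp n = 0 := by
      intro n
      show p ^ a • (((q : ℤ) * B) • t n) = 0
      calc p ^ a • (((q : ℤ) * B) • t n)
          = ((p ^ a : ℕ) : ℤ) • (((q : ℤ) * B) • t n) := (natCast_zsmul _ _).symm
        _ = (B * ((p ^ a * q : ℕ) : ℤ)) • t n := by rw [smul_smul]; congr 1; push_cast; ring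
        _ = B • (((p ^ a * q : ℕ) : ℤ) • t n) := mul_smul _ _ _
        _ = B • ((p ^ a * q) • t n) := by rw [natCast_zsmul]
        _ = 0 := by rw [hpaq, hNt n, smul_zero]
    have hkillq : ∀ n, q • tq n = 0 := by
      intro n
      show q • (((p ^ a : ℤ) * A) • t n) = 0
      calc q • (((p ^ a : ℤ) * A) • t n)
          = ((q : ℕ) : ℤ) • (((p ^ a : ℤ) * A) • t n) := (natCast_zsmul _ _).symm
        _ = (A * ((p ^ a * q : ℕ) : ℤ)) • t n := by rw [smul_smul]; congr 1; push_cast; ring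
        _ = A • (((p ^ a * q : ℕ) : ℤ) • t n) := mul_smul _ _ _
        _ = A • ((p ^ a * q) • t n) := by rw [natCast_zsmul]
        _ = 0 := by rw [hpaq, hNt n, smul_zero]
    set sA : ℕ → D₁ := fun n => ∑ j ∈ Finset.range a, p ^ j • tp (n + j) with hsAdef
    have hfsA : ∀ n, f (sA n) = 0 := by
      intro n
      show f (∑ j ∈ Finset.range a, p ^ j • tp (n + j)) = 0
      rw [map_sum]
      exact Finset.sum_eq_zero fun j _ => by rw [map_nsmul, hftp, smul_zero]
    have hsAeq : ∀ n, sA n = tp n + p • sA (n + 1) := by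
      intro n
      rcases Nat.eq_zero_or_pos a with ha | ha
      · have h0 : tp n = 0 := by
          have := hkillp n; rwa [ha, pow_zero, one_smul] at this
        show (∑ j ∈ Finset.range a, p ^ j • tp (n + j))
            = tp n + p • ∑ j ∈ Finset.range a, p ^ j • tp (n + 1 + j)
        rw [ha, h0]; simp
      · obtain ⟨k, hk⟩ : ∃ k, a = k + 1 := ⟨a - 1, by omega⟩
        have hlast : p • (p ^ k • tp (n + 1 + k)) = 0 := by
          rw [smul_smul, ← pow_succ', ← hk]
          exact hkillp (n + 1 + k)
        have hterm : ∀ j, p • (p ^ j • tp (n + 1 + j)) = p ^ (j + 1) • tp (n + (j + 1)) := by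
          intro j
          rw [smul_smul, ← pow_succ', show n + 1 + j = n + (j + 1) by omega]
        have eL : (∑ j ∈ Finset.range (k + 1), p ^ j • tp (n + j))
            = (∑ j ∈ Finset.range k, p ^ (j + 1) • tp (n + (j + 1))) + tp n := by
          rw [Finset.sum_range_succ']
          simp
        have eR : p • (∑ j ∈ Finset.range (k + 1), p ^ j • tp (n + 1 + j))
            = ∑ j ∈ Finset.range k, p ^ (j + 1) • tp (n + (j + 1)) := by
          rw [Finset.smul_sum, Finset.sum_range_succ, hlast, add_zero]
          exact Finset.sum_congr rfl fun j _ => hterm j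
        show (∑ j ∈ Finset.range a, p ^ j • tp (n + j))
            = tp n + p • ∑ j ∈ Finset.range a, p ^ j • tp (n + 1 + j)
        rw [hk, eL, eR]
        abel
    obtain ⟨c₂, hc₂⟩ := aux_exists_inv hqp.symm
    set sB : ℕ → D₁ := fun n => Nat.rec (0 : D₁) (fun k prev => c₂ • (prev - tq k)) n
      with hsBdef
    have hsB0 : sB 0 = 0 := rfl
    have hsBsucc : ∀ n, sB (n + 1) = c₂ • (sB n - tq n) := fun n => rfl
    have hsBprop : ∀ n, q • sB n = 0 ∧ f (sB n) = 0 := by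
      intro n
      induction n with
      | zero => rw [hsB0]; simp
      | succ n ih =>
        rw [hsBsucc]
        constructor
        · rw [smul_comm, smul_sub, ih.1, hkillq n]
          simp
        · rw [map_nsmul, map_sub, ih.2, hftq n]
          simp
    have hsBeq : ∀ n, sB n = tq n + p • sB (n + 1) := by
      intro n
      have hq1 : q • (sB n - tq n) = 0 := by
        rw [smul_sub, (hsBprop n).1, hkillq n, sub_zero]
      rw [hsBsucc, aux_smul_inv hc₂ _ hq1]
      abel
    set s : ℕ → D₁ := fun n => sA n + sB n with hsdef
    have hseq : ∀ n, s n = t n + p • s (n + 1) := by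
      intro n
      show sA n + sB n = t n + p • (sA (n + 1) + sB (n + 1))
      rw [smul_add, hsAeq n, hsBeq n, ← htsum n]
      abel
    have hfs : ∀ n, f (s n) = 0 := by
      intro n
      show f (sA n + sB n) = 0
      rw [map_add, hfsA n, (hsBprop n).2, add_zero]
    refine ⟨fun n => x' n + i₁ (s n), ?_, ?_⟩
    · intro n
      have h1 : p • x' (n + 1) = x' n + i₁ (t n) := by rw [ht n]; abel
      calc p • (x' (n + 1) + i₁ (s (n + 1)))
          = p • x' (n + 1) + i₁ (p • s (n + 1)) := by rw [smul_add, map_nsmul]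
        _ = x' n + i₁ (t n + p • s (n + 1)) := by rw [h1, map_add]; abel
        _ = x' n + i₁ (s n) := by rw [← hseq n]
    · intro n
      show g (x' n + i₁ (s n)) = u n
      rw [map_add, hsq₁, hfs n, map_zero, add_zero, hx'g]
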